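/- (LaSalle's invariance principle.) Let Ω ⊂ D be a compact set that is positively invariant with respect to the autonomous system ẋ = F(x), where F is locally Lipschitz on an open set D ⊆ ℝⁿ. Let V : D → ℝ be continuously differentiable with ∇V(x) · F(x) ≤ 0 for all x ∈ Ω. Let E = {x ∈ Ω : ∇V(x) · F(x) = 0} and let M be the largest invariant set contained in E. Then every solution x(·) starting in Ω approaches M as t → ∞: for every ε > 0 there exists T > 0 such that inf_{p ∈ M} ‖x(t) − p‖ < ε for all t > T. -/

import Mathlib

open scoped InnerProductSpace

/-- A set `S` is invariant with respect to the autonomous system `ẋ = F x` if every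
(globally defined) solution starting in `S` remains in `S` for all (past and future) time. -/
def IsInvariantSet {n : ℕ} (F : EuclideanSpace ℝ (Fin n) → EuclideanSpace ℝ (Fin n))
    (S : Set (EuclideanSpace ℝ (Fin n))) : Prop :=
  ∀ x : ℝ → EuclideanSpace ℝ (Fin n),
    (∀ t : ℝ, HasDerivAt x (F (x t)) t) → x 0 ∈ S → ∀ t : ℝ, x t ∈ S

/-- A set `S` is positively invariant with respect to the autonomous system `ẋ = F x` if
every solution starting in `S` remains in `S` for all future time. -/
def IsPosInvariantSet {n : ℕ} (F : EuclideanSpace ℝ (Fin n) → EuclideanSpace ℝ (Fin n))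
    (S : Set (EuclideanSpace ℝ (Fin n))) : Prop :=
  ∀ (x : ℝ → EuclideanSpace ℝ (Fin n)) (T : ℝ), 0 ≤ T →
    (∀ t ∈ Set.Icc (0 : ℝ) T, HasDerivAt x (F (x t)) t) → x 0 ∈ S → x T ∈ S

section Helpers

open Set Filter Metric Topology
open scoped NNReal

variable {EE : Type*} [NormedAddCommGroup EE] [NormedSpace ℝ EE]

set_option linter.unusedSectionVars false

lemma lasalle_lipschitzOnWith_of_compact {D : Set EE} (hD : IsOpen D) {F : EE → EE}
    (hFlip : ∀ x ∈ D, ∃ K : NNReal, ∃ s ∈ nhdsWithin x D, LipschitzOnWith K F s)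
    {K : Set EE} (hKD : K ⊆ D) (hK : IsCompact K) : ∃ L : NNReal, LipschitzOnWith L F K := by
  by_contra h
  push_neg at h
  have hFc : ContinuousOn F K := by
    intro z hz
    obtain ⟨L, s, hs, hl⟩ := hFlip z (hKD hz)
    rw [hD.nhdsWithin_eq (hKD hz)] at hs
    exact (hl.continuousOn.continuousAt hs).continuousWithinAt
  obtain ⟨C, hC⟩ := Metric.isBounded_iff.mp (hK.image_of_continuousOn hFc).isBounded
  have hbad : ∀ m : ℕ, ∃ a ∈ K, ∃ b ∈ K, (m : ℝ) * dist a b < dist (F a) (F b) := by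
    intro m
    have h1 := h m
    rw [lipschitzOnWith_iff_dist_le_mul] at h1
    push_neg at h1
    obtain ⟨a, ha, b, hb, hab⟩ := h1
    exact ⟨a, ha, b, hb, by exact_mod_cast hab⟩
  choose a ha b hb hab using hbad
  obtain ⟨α, hα, φ, hφ, hφa⟩ := hK.tendsto_subseq ha
  obtain ⟨β, hβ, ψ, hψ, hψb⟩ := hK.tendsto_subseq (fun m => hb (φ m))
  set σ : ℕ → ℕ := φ ∘ ψ with hσdef
  have hσ : StrictMono σ := hφ.comp hψ
  have haσ : Tendsto (fun m => a (σ m)) atTop (𝓝 α) := hφa.comp hψ.tendsto_atTop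
  have hbσ : Tendsto (fun m => b (σ m)) atTop (𝓝 β) := hψb
  -- distance between `a m` and `b m` tends to zero
  have hdist0 : Tendsto (fun m => dist (a (σ m)) (b (σ m))) atTop (𝓝 0) := by
    have hle : ∀ᶠ m in atTop, dist (a (σ m)) (b (σ m)) ≤ C / (m : ℝ) := by
      filter_upwards [eventually_gt_atTop 0] with m hm
      have h1 : (σ m : ℝ) * dist (a (σ m)) (b (σ m)) < C := by
        refine lt_of_lt_of_le (hab (σ m)) ?_
        exact hC (mem_image_of_mem F (ha _)) (mem_image_of_mem F (hb _))
      have h2 : (m : ℝ) * dist (a (σ m)) (b (σ m)) ≤ (σ m : ℝ) * dist (a (σ m)) (b (σ m)) := by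
        apply mul_le_mul_of_nonneg_right _ dist_nonneg
        exact_mod_cast hσ.le_apply
      rw [div_eq_inv_mul, ← mul_le_mul_iff_right₀ (show (0:ℝ) < (m:ℝ) by exact_mod_cast hm)]
      rw [← mul_assoc, mul_inv_cancel₀ (by positivity), one_mul]
      linarith
    refine tendsto_of_tendsto_of_tendsto_of_le_of_le' tendsto_const_nhds
      (tendsto_const_div_atTop_nhds_zero_nat C)
      (Eventually.of_forall fun m => dist_nonneg) hle
  have hbσα : Tendsto (fun m => b (σ m)) atTop (𝓝 α) := by
    rw [tendsto_iff_dist_tendsto_zero]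
    refine tendsto_of_tendsto_of_tendsto_of_le_of_le' tendsto_const_nhds ?_
      (Eventually.of_forall fun m => dist_nonneg)
      (Eventually.of_forall fun m => dist_triangle_left (b (σ m)) α (a (σ m)))
    have := (hdist0.add (tendsto_iff_dist_tendsto_zero.mp haσ))
    simpa using this
  have hβα : β = α := tendsto_nhds_unique hbσ hbσα
  obtain ⟨L₀, s, hs, hl⟩ := hFlip α (hKD hα)
  rw [hD.nhdsWithin_eq (hKD hα)] at hs
  have hev1 : ∀ᶠ m in atTop, a (σ m) ∈ s := haσ (by exact hs)
  have hev2 : ∀ᶠ m in atTop, b (σ m) ∈ s := by rw [hβα] at hbσ; exact hbσ (by exact hs)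
  have hev3 : ∀ᶠ m : ℕ in atTop, (L₀ : ℝ) < (m : ℝ) :=
    (tendsto_natCast_atTop_atTop (R := ℝ)).eventually_gt_atTop _
  obtain ⟨m, hm12, h3⟩ := ((hev1.and hev2).and hev3).exists
  obtain ⟨h1, h2⟩ := hm12
  have hlip := hl.dist_le_mul _ h1 _ h2
  have hgt := hab (σ m)
  have hd0 : 0 < dist (a (σ m)) (b (σ m)) := by
    rcases (dist_nonneg : (0:ℝ) ≤ dist (a (σ m)) (b (σ m))).lt_or_eq with h | h
    · exact h
    · exfalso; rw [← h] at hgt; simp at hgt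
      exact absurd (hgt) (by rw [← h] at hlip; simp at hlip; simp [hlip])
  have hmσ : (m : ℝ) ≤ (σ m : ℝ) := by exact_mod_cast hσ.le_apply
  nlinarith [hgt, hlip, hd0, h3, hmσ]

lemma lasalle_gron' {G : EE → EE} {K : Set EE} {L : ℝ≥0} (hG : LipschitzOnWith L G K)
    {f g : ℝ → EE} {b : ℝ}
    (hf : ∀ s ∈ Set.Icc (0:ℝ) b, HasDerivAt f (G (f s)) s)
    (hg : ∀ s ∈ Set.Icc (0:ℝ) b, HasDerivAt g (G (g s)) s)
    (hfK : ∀ s ∈ Set.Icc (0:ℝ) b, f s ∈ K)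
    (hgK : ∀ s ∈ Set.Icc (0:ℝ) b, g s ∈ K) :
    ∀ t ∈ Set.Icc (0:ℝ) b, dist (f t) (g t) ≤ dist (f 0) (g 0) * Real.exp (L * t) := by
  intro t ht
  have h := dist_le_of_trajectories_ODE_of_mem (v := fun _ => G) (s := fun _ => K)
    (K := L) (f := f) (g := g) (a := 0) (b := b) (fun _ _ => hG)
    (fun s hs => (hf s hs).continuousAt.continuousWithinAt)
    (fun s hs => (hf s (Ico_subset_Icc_self hs)).hasDerivWithinAt)
    (fun s hs => hfK s (Ico_subset_Icc_self hs))
    (fun s hs => (hg s hs).continuousAt.continuousWithinAt)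
    (fun s hs => (hg s (Ico_subset_Icc_self hs)).hasDerivWithinAt)
    (fun s hs => hgK s (Ico_subset_Icc_self hs))
    le_rfl t ht
  simpa using h

lemma lasalle_exists_local_solution [CompleteSpace EE] {F : EE → EE} {p : EE} {L : ℝ≥0}
    {R : ℝ} (hR : 0 < R) (hlip : LipschitzOnWith L F (Metric.closedBall p R)) :
    ∃ ε > (0:ℝ), ∃ f : ℝ → EE, f 0 = p ∧ ∀ t ∈ Set.Ioo (-ε) ε, HasDerivAt f (F (f t)) t := by
  set C : ℝ := ‖F p‖ + L * R with hCdef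
  have hC0 : 0 ≤ C := by positivity
  set ε : ℝ := R / (C + 1) with hεdef
  have hε0 : 0 < ε := by positivity
  have hnorm : ∀ z ∈ Metric.closedBall p R, ‖F z‖ ≤ C := by
    intro z hz
    have h1 : dist (F z) (F p) ≤ (L : ℝ) * dist z p :=
      hlip.dist_le_mul z hz p (Metric.mem_closedBall_self hR.le)
    have h2 : dist z p ≤ R := Metric.mem_closedBall.mp hz
    have h3 : ‖F z‖ ≤ dist (F z) (F p) + ‖F p‖ := by
      have := dist_triangle (F z) (F p) 0
      simpa [dist_zero_right] using this
    have h4 : (L : ℝ) * dist z p ≤ (L : ℝ) * R :=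
      mul_le_mul_of_nonneg_left h2 L.coe_nonneg
    rw [hCdef]; linarith
  have hpl : IsPicardLindelof (fun _ : ℝ => F) (tmin := -ε) (tmax := ε)
      ⟨0, by constructor <;> linarith⟩ p ⟨R, hR.le⟩ 0 ⟨C, hC0⟩ L :=
    IsPicardLindelof.of_time_independent hnorm hlip (by
      show C * max (ε - 0) (0 - -ε) ≤ R - 0
      rw [sub_zero, sub_zero, zero_sub, neg_neg, max_self, hεdef, ← mul_div_assoc,
        div_le_iff₀ (by positivity)]
      nlinarith)
  obtain ⟨f, hf0, hf⟩ := hpl.exists_eq_forall_mem_Icc_hasDerivWithinAt₀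
  exact ⟨ε, hε0, f, hf0, fun t ht =>
    (hf t (Ioo_subset_Icc_self ht)).hasDerivAt (Icc_mem_nhds ht.1 ht.2)⟩

lemma lasalle_propagate {Ω K : Set EE} (hΩc : IsCompact Ω) (hΩK : Ω ⊆ K) {r : ℝ} (hr : 0 < r)
    (hK : ∀ z w, w ∈ Ω → dist z w ≤ r → z ∈ K)
    {L : ℝ≥0} {G : EE → EE} (hG : LipschitzOnWith L G K)
    {b₀ : ℝ} {Y : ℝ → EE} (hY : ∀ s ∈ Set.Icc (0:ℝ) b₀, HasDerivAt Y (G (Y s)) s)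
    {Z : ℕ → ℝ → EE}
    (hZ : ∀ b : ℝ, 0 ≤ b → ∀ᶠ k in atTop, ∀ s ∈ Set.Icc (0:ℝ) b,
        HasDerivAt (Z k) (G (Z k s)) s ∧ Z k s ∈ Ω)
    (h0 : Tendsto (fun k => Z k 0) atTop (𝓝 (Y 0))) :
    ∀ t ∈ Set.Icc (0:ℝ) b₀, Tendsto (fun k => Z k t) atTop (𝓝 (Y t)) := by
  -- the key Grönwall estimate
  have key : ∀ c, 0 ≤ c → c ≤ b₀ → (∀ s ∈ Set.Icc (0:ℝ) c, Y s ∈ K) →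
      ∀ t ∈ Set.Icc (0:ℝ) c, Tendsto (fun k => Z k t) atTop (𝓝 (Y t)) := by
    intro c hc0 hcb hYK t ht
    rw [tendsto_iff_dist_tendsto_zero]
    have hbd : ∀ᶠ k in atTop,
        dist (Z k t) (Y t) ≤ dist (Z k 0) (Y 0) * Real.exp (L * t) := by
      filter_upwards [hZ c hc0] with k hk
      exact lasalle_gron' hG (fun s hs => (hk s hs).1)
        (fun s hs => hY s ⟨hs.1, hs.2.trans hcb⟩)
        (fun s hs => hΩK (hk s hs).2) hYK t ht
    have hlim : Tendsto (fun k => dist (Z k 0) (Y 0) * Real.exp (L * t)) atTop (𝓝 0) := by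
      have := (tendsto_iff_dist_tendsto_zero.mp h0).mul_const (Real.exp (L * t))
      simpa using this
    exact tendsto_of_tendsto_of_tendsto_of_le_of_le' tendsto_const_nhds hlim
      (Eventually.of_forall fun k => dist_nonneg) hbd
  -- membership of limits in Ω
  have hPΩ : ∀ t, 0 ≤ t → Tendsto (fun k => Z k t) atTop (𝓝 (Y t)) → Y t ∈ Ω := by
    intro t ht hP
    exact hΩc.isClosed.mem_of_tendsto hP
      ((hZ t ht).mono fun k hk => (hk t ⟨ht, le_refl t⟩).2)
  by_contra hcon
  push_neg at hcon
  obtain ⟨tbad, htbad, hnot⟩ := hcon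
  set B : Set ℝ := {t | t ∈ Set.Icc (0:ℝ) b₀ ∧ ¬ Tendsto (fun k => Z k t) atTop (𝓝 (Y t))}
  have hBne : B.Nonempty := ⟨tbad, htbad, hnot⟩
  have hBbdd : BddBelow B := ⟨0, fun t htB => htB.1.1⟩
  set T := sInf B with hTdef
  have hT0 : 0 ≤ T := le_csInf hBne fun t htB => htB.1.1
  have hTb : T ≤ b₀ := (csInf_le hBbdd hBne.choose_spec).trans hBne.choose_spec.1.2
  have hbelow : ∀ s, 0 ≤ s → s < T → Tendsto (fun k => Z k s) atTop (𝓝 (Y s)) := by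
    intro s hs0 hsT
    by_contra hns
    exact absurd (csInf_le hBbdd ⟨⟨hs0, hsT.le.trans hTb⟩, hns⟩) (not_le.mpr hsT)
  have hYltΩ : ∀ s, 0 ≤ s → s < T → Y s ∈ Ω := fun s h1 h2 => hPΩ s h1 (hbelow s h1 h2)
  have hYcont : ContinuousAt Y T := (hY T ⟨hT0, hTb⟩).continuousAt
  have hYT : Y T ∈ Ω := by
    rcases hT0.lt_or_eq with hT | hT
    · -- T > 0 : use left limits
      refine hΩc.isClosed.mem_of_tendsto
        (hYcont.continuousWithinAt.tendsto (s := Iio T)) ?_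
      have h1 : ∀ᶠ s in 𝓝[<] T, s ∈ Iio T := eventually_mem_nhdsWithin
      have h2 : ∀ᶠ s in 𝓝[<] T, (0:ℝ) < s :=
        nhdsWithin_le_nhds (eventually_gt_nhds hT)
      filter_upwards [h1, h2] with s hs1 hs2
      exact hYltΩ s hs2.le hs1
    · rw [← hT]; exact hPΩ 0 le_rfl h0
  -- choose η from continuity
  obtain ⟨η, hη0, hη⟩ := Metric.continuousAt_iff.mp hYcont r hr
  set b₁ := min (T + η / 2) b₀ with hb₁def
  have hTb₁ : T ≤ b₁ := le_min (by linarith) hTb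
  have hb₁0 : 0 ≤ b₁ := hT0.trans hTb₁
  have hYK : ∀ s ∈ Set.Icc (0:ℝ) b₁, Y s ∈ K := by
    intro s hs
    rcases lt_trichotomy s T with h | h | h
    · exact hΩK (hYltΩ s hs.1 h)
    · rw [h]; exact hΩK hYT
    · have hsb : s ≤ T + η / 2 := hs.2.trans (min_le_left _ _)
      have hdist : dist s T < η := by
        rw [Real.dist_eq, abs_of_pos (by linarith)]; linarith
      exact hK (Y s) (Y T) hYT (le_of_lt (hη hdist)) 
  have hgood := key b₁ hb₁0 (hTb₁.trans' hT0 |> fun _ => min_le_right _ _) hYK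
  -- find a bad point below b₁
  have hlt : sInf B < T + η / 2 := by rw [← hTdef]; linarith
  obtain ⟨t, htB, htlt⟩ := exists_lt_of_csInf_lt hBne hlt
  exact htB.2 (key b₁ hb₁0 (min_le_right _ _) hYK t ⟨htB.1.1, le_min htlt.le htB.1.2⟩)

end Helpers

open Set Filter Metric Topology
open scoped NNReal

/-- **LaSalle's invariance principle.** Let `Ω ⊆ D` be a compact positively invariant set
for `ẋ = F x` with `F` locally Lipschitz on the open set `D`, let `V` be continuously
differentiable with `V̇ = ⟪∇V, F⟫ ≤ 0` on `Ω`, let `E = {x ∈ Ω | V̇ x = 0}` and let `M` be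
the largest invariant set contained in `E`. Then every solution starting in `Ω`
approaches `M` as `t → ∞`. -/
theorem lasalle_invariance_principle
    {n : ℕ} {D : Set (EuclideanSpace ℝ (Fin n))}
    (hD : IsOpen D)
    (F : EuclideanSpace ℝ (Fin n) → EuclideanSpace ℝ (Fin n))
    (hFlip : ∀ x ∈ D, ∃ K : NNReal, ∃ s ∈ nhdsWithin x D, LipschitzOnWith K F s)
    (Ω : Set (EuclideanSpace ℝ (Fin n)))
    (hΩD : Ω ⊆ D) (hΩcomp : IsCompact Ω)
    (hΩinv : IsPosInvariantSet F Ω)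
    (V : EuclideanSpace ℝ (Fin n) → ℝ)
    (hV : ContDiffOn ℝ 1 V D)
    (hVdot : ∀ x ∈ Ω, ⟪gradient V x, F x⟫_ℝ ≤ 0)
    (E : Set (EuclideanSpace ℝ (Fin n)))
    (hE : E = {x ∈ Ω | ⟪gradient V x, F x⟫_ℝ = 0})
    (M : Set (EuclideanSpace ℝ (Fin n)))
    (hME : M ⊆ E) (hMinv : IsInvariantSet F M)
    (hMmax : ∀ M' : Set (EuclideanSpace ℝ (Fin n)),
      M' ⊆ E → IsInvariantSet F M' → M' ⊆ M) :
    ∀ x : ℝ → EuclideanSpace ℝ (Fin n),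
      (∀ t : ℝ, 0 ≤ t → HasDerivAt x (F (x t)) t) → x 0 ∈ Ω →
      ∀ ε > 0, ∃ T > 0, ∀ t > T, Metric.infDist (x t) M < ε := by
  intro x hx hx0 ε hε
  classical
  -- the trajectory stays in Ω
  have hxΩ : ∀ t, 0 ≤ t → x t ∈ Ω := fun t ht =>
    hΩinv x t ht (fun s hs => hx s hs.1) hx0
  -- a compact neighbourhood K of Ω inside D
  obtain ⟨δ, hδ0, hδ⟩ := hΩcomp.exists_thickening_subset_open hD hΩD
  set r : ℝ := δ / 2 with hrdef
  have hr : 0 < r := half_pos hδ0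
  set K : Set (EuclideanSpace ℝ (Fin n)) := Metric.cthickening r Ω with hKdef
  have hKD : K ⊆ D :=
    (Metric.cthickening_subset_thickening' hδ0 (half_lt_self hδ0) Ω).trans hδ
  have hKc : IsCompact K := hΩcomp.cthickening
  have hΩK : Ω ⊆ K := Metric.self_subset_cthickening Ω
  have hKmem : ∀ z w, w ∈ Ω → dist z w ≤ r → z ∈ K := fun z w hw hzw =>
    Metric.mem_cthickening_of_dist_le z w r Ω hw hzw
  obtain ⟨L, hL⟩ := lasalle_lipschitzOnWith_of_compact hD hFlip hKD hKc
  -- differentiability of V and the chain rule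
  have hgrad : ∀ p ∈ D, HasGradientAt V (gradient V p) p := fun p hp =>
    ((hV.contDiffAt (hD.mem_nhds hp)).differentiableAt one_ne_zero).hasGradientAt
  have hchain : ∀ (γ : ℝ → EuclideanSpace ℝ (Fin n)) (t : ℝ) (v : EuclideanSpace ℝ (Fin n)),
      HasDerivAt γ v t → γ t ∈ D →
      HasDerivAt (fun s => V (γ s)) (⟪gradient V (γ t), v⟫_ℝ) t := by
    intro γ t v hγ hγD
    have h1 := hasGradientAt_iff_hasFDerivAt.mp (hgrad (γ t) hγD)
    have h2 := h1.comp_hasDerivAt t hγ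
    have h3 : HasDerivAt (fun s => V (γ s)) _ t := h2
    simpa using h3
  -- V is nonincreasing along the trajectory
  have hmono : AntitoneOn (fun t => V (x t)) (Set.Ici 0) := by
    apply antitoneOn_of_deriv_nonpos (convex_Ici 0)
    · exact fun t ht =>
        (hchain x t _ (hx t ht) (hΩD (hxΩ t ht))).continuousAt.continuousWithinAt
    · intro t ht
      rw [interior_Ici] at ht
      exact (hchain x t _ (hx t ht.le) (hΩD (hxΩ t ht.le))).differentiableAt.differentiableWithinAt
    · intro t ht
      rw [interior_Ici] at ht
      rw [(hchain x t _ (hx t ht.le) (hΩD (hxΩ t ht.le))).deriv]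
      exact hVdot (x t) (hxΩ t ht.le)
  -- the limit value of V along the trajectory
  set g : ℝ → ℝ := fun t => V (x (max t 0)) with hgdef
  have hganti : Antitone g := fun t₁ t₂ h12 =>
    hmono (Set.mem_Ici.mpr (le_max_right _ _)) (Set.mem_Ici.mpr (le_max_right _ _)) (max_le_max h12 le_rfl)
  have hbdd : BddBelow (Set.range g) := by
    have h1 : BddBelow (V '' Ω) :=
      (hΩcomp.image_of_continuousOn (hV.continuousOn.mono hΩD)).isBounded.bddBelow
    refine h1.mono ?_
    rintro - ⟨t, rfl⟩
    exact ⟨x (max t 0), hxΩ _ (le_max_right _ _), rfl⟩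
  set c : ℝ := ⨅ t, g t with hcdef
  have hgc : Tendsto g atTop (𝓝 c) := tendsto_atTop_ciInf hganti hbdd
  have hgx : ∀ t, 0 ≤ t → g t = V (x t) := fun t ht => by
    rw [hgdef]; simp [max_eq_left ht]
  -- limit points of the trajectory lie in Ω and have V-value c
  have hVlim : ∀ (u : ℕ → ℝ) (p : EuclideanSpace ℝ (Fin n)), Tendsto u atTop atTop →
      Tendsto (fun k => x (u k)) atTop (𝓝 p) → p ∈ Ω ∧ V p = c := by
    intro u p hu hxu
    have hpΩ : p ∈ Ω := hΩcomp.isClosed.mem_of_tendsto hxu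
      ((hu.eventually_ge_atTop 0).mono fun k hk => hxΩ _ hk)
    refine ⟨hpΩ, ?_⟩
    have hVc : ContinuousAt V p := hV.continuousOn.continuousAt (hD.mem_nhds (hΩD hpΩ))
    have h1 : Tendsto (fun k => V (x (u k))) atTop (𝓝 (V p)) := hVc.tendsto.comp hxu
    have h2 : Tendsto (fun k => g (u k)) atTop (𝓝 c) := hgc.comp hu
    exact tendsto_nhds_unique
      (h1.congr' ((hu.eventually_ge_atTop 0).mono fun k hk => (hgx _ hk).symm)) h2
  -- the ω-limit set of the trajectory
  set Om : Set (EuclideanSpace ℝ (Fin n)) :=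
    {p | ∃ u : ℕ → ℝ, Tendsto u atTop atTop ∧ Tendsto (fun k => x (u k)) atTop (𝓝 p)}
    with hOmdef
  -- shifted trajectories: they satisfy the hypotheses of `lasalle_propagate`
  have hZfwd : ∀ (u : ℕ → ℝ), Tendsto u atTop atTop → ∀ b : ℝ, 0 ≤ b →
      ∀ᶠ k in atTop, ∀ s ∈ Set.Icc (0:ℝ) b,
        HasDerivAt (fun s' => x (u k + s')) (F (x (u k + s))) s ∧ x (u k + s) ∈ Ω := by
    intro u hu b hb
    filter_upwards [hu.eventually_ge_atTop 0] with k hk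
    intro s hs
    have hts : 0 ≤ u k + s := by linarith [hs.1]
    constructor
    · have h1 := hx (u k + s) hts
      have h2 : HasDerivAt (fun s' : ℝ => u k + s') 1 s := by
        simpa using (hasDerivAt_id s).const_add (u k)
      have h3 := h1.scomp s h2
      rw [one_smul] at h3
      exact h3
    · exact hxΩ _ hts
  have hZbwd : ∀ (u : ℕ → ℝ), Tendsto u atTop atTop → ∀ b : ℝ, 0 ≤ b →
      ∀ᶠ k in atTop, ∀ s ∈ Set.Icc (0:ℝ) b,
        HasDerivAt (fun s' => x (u k - s')) (-F (x (u k - s))) s ∧ x (u k - s) ∈ Ω := by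
    intro u hu b hb
    filter_upwards [hu.eventually_ge_atTop b] with k hk
    intro s hs
    have hts : 0 ≤ u k - s := by linarith [hs.2]
    constructor
    · have h1 := hx (u k - s) hts
      have h2 : HasDerivAt (fun s' : ℝ => u k - s') (-1) s := by
        simpa using (hasDerivAt_id s).const_sub (u k)
      have h3 := h1.scomp s h2
      rw [neg_one_smul] at h3
      exact h3
    · exact hxΩ _ hts
  have hLneg : LipschitzOnWith L (fun z => -F z) K := by
    intro z hz w hw
    simpa [edist_neg_neg] using hL hz hw
  -- points of Om are limits of shifted trajectories at every (forward) time of any local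
  -- solution starting at them
  have hfollow : ∀ (u : ℕ → ℝ) (p : EuclideanSpace ℝ (Fin n)) (y : ℝ → EuclideanSpace ℝ (Fin n))
      (b₀ : ℝ), Tendsto u atTop atTop → Tendsto (fun k => x (u k)) atTop (𝓝 p) →
      y 0 = p → (∀ s ∈ Set.Icc (0:ℝ) b₀, HasDerivAt y (F (y s)) s) →
      ∀ t ∈ Set.Icc (0:ℝ) b₀, Tendsto (fun k => x (u k + t)) atTop (𝓝 (y t)) := by
    intro u p y b₀ hu hxu hy0 hy t ht
    have := lasalle_propagate hΩcomp hΩK hr hKmem hL hy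
      (Z := fun k s => x (u k + s)) (hZfwd u hu) (by simpa [hy0] using hxu) t ht
    exact this
  -- the ω-limit set is contained in E
  have hOmE : Om ⊆ E := by
    intro p hp
    obtain ⟨u, hu, hxu⟩ := hp
    obtain ⟨hpΩ, hVp⟩ := hVlim u p hu hxu
    rw [hE]
    refine ⟨hpΩ, ?_⟩
    -- a local solution through p
    obtain ⟨L₁, s₁, hs₁, hl₁⟩ := hFlip p (hΩD hpΩ)
    rw [hD.nhdsWithin_eq (hΩD hpΩ)] at hs₁
    obtain ⟨R, hR0, hball⟩ := Metric.nhds_basis_closedBall.mem_iff.mp hs₁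
    obtain ⟨ε₁, hε₁, y, hy0, hy⟩ := lasalle_exists_local_solution hR0 (hl₁.mono hball)
    have hyIcc : ∀ s ∈ Set.Icc (0:ℝ) (ε₁/2), HasDerivAt y (F (y s)) s := fun s hs =>
      hy s ⟨by linarith [hs.1], by linarith [hs.2]⟩
    -- V ∘ y is constant on [0, ε₁/2]
    have hyconst : ∀ t ∈ Set.Icc (0:ℝ) (ε₁/2), V (y t) = c := by
      intro t ht
      have h1 := hfollow u p y (ε₁/2) hu hxu hy0 hyIcc t ht
      exact (hVlim (fun k => u k + t) (y t) (tendsto_atTop_add_const_right atTop t hu) h1).2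
    -- hence its (one-sided) derivative at 0 vanishes
    have hdVy : HasDerivAt (fun s => V (y s)) (⟪gradient V p, F p⟫_ℝ) 0 := by
      have h1 := hchain y 0 (F (y 0)) (hy 0 ⟨by linarith, hε₁⟩) (by rw [hy0]; exact hΩD hpΩ)
      rw [hy0] at h1
      exact h1
    have hud : UniqueDiffWithinAt ℝ (Set.Icc (0:ℝ) (ε₁/2)) 0 :=
      uniqueDiffOn_Icc (by linarith) 0 ⟨le_rfl, by linarith⟩
    have hD1 : HasDerivWithinAt (fun s => V (y s)) (⟪gradient V p, F p⟫_ℝ)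
        (Set.Icc (0:ℝ) (ε₁/2)) 0 := hdVy.hasDerivWithinAt
    have hD2 : HasDerivWithinAt (fun s => V (y s)) 0 (Set.Icc (0:ℝ) (ε₁/2)) 0 := by
      refine (hasDerivWithinAt_const 0 _ c).congr (fun s hs => (hyconst s hs)) ?_
      rw [hy0]; exact hVp
    exact (hD1.derivWithin hud).symm.trans (hD2.derivWithin hud)
  -- the ω-limit set is invariant
  have hOminv : IsInvariantSet F Om := by
    intro y hy hy0 t
    obtain ⟨u, hu, hxu⟩ := hy0
    rcases le_or_gt 0 t with ht | ht
    · have h1 := hfollow u (y 0) y t hu hxu rfl (fun s _ => hy s) t ⟨ht, le_rfl⟩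
      exact ⟨fun k => u k + t, tendsto_atTop_add_const_right atTop t hu, h1⟩
    · -- backward time: reverse the flow
      have hY : ∀ s ∈ Set.Icc (0:ℝ) (-t), HasDerivAt (fun s' => y (-s')) (-F (y (-s))) s := by
        intro s _
        have h1 := hy (-s)
        have h2 : HasDerivAt (fun s' : ℝ => -s') (-1) s := by
          exact hasDerivAt_neg s
        have h3 := h1.scomp s h2
        rw [neg_one_smul] at h3
        exact h3
      have h0 : Tendsto (fun k => x (u k - 0)) atTop (𝓝 (y (-0))) := by
        simpa using hxu
      have h1 := lasalle_propagate hΩcomp hΩK hr hKmem hLneg hY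
        (Z := fun k s => x (u k - s)) (hZbwd u hu) h0 (-t) ⟨by linarith, le_rfl⟩
      rw [neg_neg] at h1
      refine ⟨fun k => u k - (-t), tendsto_atTop_add_const_right atTop t hu |>.congr ?_, ?_⟩
      · intro k; ring
      · convert h1 using 2
  have hOmM : Om ⊆ M := hMmax Om hOmE hOminv
  -- conclusion by compactness
  by_contra hcon
  push_neg at hcon
  choose t' ht'1 ht'2 using fun k : ℕ => hcon ((k : ℝ) + 1) (by positivity)
  have ht'big : ∀ k : ℕ, (k : ℝ) < t' k := fun k => lt_trans (by linarith) (ht'1 k)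
  have hu : Tendsto t' atTop atTop :=
    tendsto_atTop_mono (fun k => (ht'big k).le) tendsto_natCast_atTop_atTop
  have hmem : ∀ k, x (t' k) ∈ Ω := fun k =>
    hxΩ _ (le_trans (by positivity) (ht'big k).le)
  obtain ⟨p, hpΩ, φ, hφ, hconv⟩ := hΩcomp.tendsto_subseq hmem
  have hpM : p ∈ M := hOmM ⟨t' ∘ φ, hu.comp hφ.tendsto_atTop, hconv⟩
  have h1 : Tendsto (fun k => Metric.infDist (x (t' (φ k))) M) atTop (𝓝 (Metric.infDist p M)) :=
    ((Metric.continuous_infDist_pt M).continuousAt.tendsto).comp hconv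
  have h2 : Metric.infDist p M = 0 := Metric.infDist_zero_of_mem hpM
  have h3 : ε ≤ Metric.infDist p M :=
    ge_of_tendsto h1 (Eventually.of_forall fun k => ht'2 (φ k))
  linarith
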